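/- (Correctness of the RAW algorithm.) Let s ≥ 1 be a natural number dividing W and let x ∈ U. Suppose that for every ℓ ∈ {0, 1, …, W/s} a real number Â(ℓ) is given satisfying the fixed-window estimation guarantee f_x^{ℓ·s} ≤ Â(ℓ) ≤ f_x^{ℓ·s} + s. Then for all indices i ≤ j ≤ W, the RAW estimate v := Â(⌈j/s⌉) − Â(⌊i/s⌋) + s satisfies f_x^{i,j} ≤ v ≤ f_x^{i,j} + 4s. (With s = Wε/4 this says RAW answers every interval query with additive error at most Wε, i.e., it solves the (W,ε)-IntervalFrequency problem.) -/

import Mathlib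

/-- The `w`-frequency of `x`: the number of occurrences of `x` among the last `w`
elements of the stream `S`. -/
def freq {U : Type*} [DecidableEq U] (S : List U) (x : U) (w : ℕ) : ℕ :=
  (S.drop (S.length - w)).count x

lemma freq_mono {U : Type*} [DecidableEq U] (S : List U) (x : U) {a b : ℕ}
    (hab : a ≤ b) : freq S x a ≤ freq S x b := by
  unfold freq
  have h : S.drop (S.length - a) =
      (S.drop (S.length - b)).drop ((S.length - a) - (S.length - b)) := by
    rw [List.drop_drop]
    congr 1
    omega
  rw [h]
  exact (List.drop_sublist _ _).count_le x

lemma freq_le_add {U : Type*} [DecidableEq U] (S : List U) (x : U) {a b : ℕ}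
    (hab : a ≤ b) : freq S x b ≤ freq S x a + (b - a) := by
  unfold freq
  set n := S.length
  have h : S.drop (n - b) =
      (S.drop (n - b)).take ((n - a) - (n - b)) ++ S.drop (n - a) := by
    nth_rewrite 1 [← List.take_append_drop ((n - a) - (n - b)) (S.drop (n - b))]
    rw [List.drop_drop]
    congr 2
    omega
  rw [h, List.count_append]
  have h1 : ((S.drop (n - b)).take ((n - a) - (n - b))).count x ≤ b - a := by
    calc ((S.drop (n - b)).take ((n - a) - (n - b))).count x
        ≤ ((S.drop (n - b)).take ((n - a) - (n - b))).length := List.count_le_length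
      _ ≤ (n - a) - (n - b) := by simp [List.length_take]
      _ ≤ b - a := by omega
  omega

/-- Correctness of the RAW algorithm: if for every `ℓ ≤ W/s` the black-box estimate
`A ℓ` satisfies `f_x^{ℓ·s} ≤ A ℓ ≤ f_x^{ℓ·s} + s`, then for all `i ≤ j ≤ W` the
RAW estimate `A(⌈j/s⌉) − A(⌊i/s⌋) + s` approximates `f_x^{i,j}` with additive
error at most `4s` and never underestimates. -/
theorem raw_correctness {U : Type*} [DecidableEq U]
    (W s : ℕ) (hs : 1 ≤ s) (hsW : s ∣ W) (S : List U) (hS : S.length = W) (x : U)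
    (A : ℕ → ℝ)
    (hA : ∀ ℓ ≤ W / s, (freq S x (ℓ * s) : ℝ) ≤ A ℓ ∧ A ℓ ≤ freq S x (ℓ * s) + s)
    (i j : ℕ) (hij : i ≤ j) (hjW : j ≤ W) :
    ((freq S x j : ℝ) - freq S x i) ≤ A (j ⌈/⌉ s) - A (i / s) + s ∧
      A (j ⌈/⌉ s) - A (i / s) + s ≤ ((freq S x j : ℝ) - freq S x i) + 4 * s := by
  obtain ⟨q, rfl⟩ := hsW
  have hq : (s * q) / s = q := by
    rw [Nat.mul_div_cancel_left _ (by omega)]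
  set ℓj := j ⌈/⌉ s with hℓj
  have hℓj' : ℓj = (j + s - 1) / s := Nat.ceilDiv_eq_add_pred_div j s
  -- basic facts about ℓj
  have h1 : j ≤ ℓj * s := by
    rw [hℓj']
    have := Nat.lt_div_mul_add (a := j + s - 1) (show 0 < s by omega)
    omega
  have h2 : ℓj * s ≤ j + s := by
    rw [hℓj']
    have := Nat.div_mul_le_self (j + s - 1) s
    omega
  have hℓjq : ℓj ≤ q := by
    rw [hℓj']
    have : j + s - 1 ≤ s * q + s - 1 := by omega
    calc (j + s - 1) / s ≤ (s * q + s - 1) / s := Nat.div_le_div_right this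
      _ = q := by
        have : s * q + s - 1 = s - 1 + q * s := by ring_nf; omega
        rw [this, Nat.add_mul_div_right _ _ (by omega)]
        have : (s - 1) / s = 0 := Nat.div_eq_of_lt (by omega)
        omega
  -- basic facts about i/s
  have h3 : (i / s) * s ≤ i := Nat.div_mul_le_self i s
  have h4 : i ≤ (i / s) * s + s := by
    have := Nat.lt_div_mul_add (a := i) (show 0 < s by omega)
    omega
  have hiq : i / s ≤ q := by
    calc i / s ≤ (s * q) / s := Nat.div_le_div_right (by omega)
      _ = q := hq
  rw [hq] at hA
  obtain ⟨hAjl, hAju⟩ := hA ℓj hℓjq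
  obtain ⟨hAil, hAiu⟩ := hA (i / s) hiq
  -- frequency comparisons
  have f1 : freq S x j ≤ freq S x (ℓj * s) := freq_mono S x h1
  have f2 : freq S x (ℓj * s) ≤ freq S x j + s := by
    have := freq_le_add S x h1
    omega
  have f3 : freq S x (i / s * s) ≤ freq S x i := freq_mono S x h3
  have f4 : freq S x i ≤ freq S x (i / s * s) + s := by
    have := freq_le_add S x h3
    omega
  constructor
  · have c1 : ((freq S x j : ℝ)) ≤ A ℓj := le_trans (by exact_mod_cast f1) hAjl
    have c2 : A (i / s) ≤ (freq S x i : ℝ) + s := by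
      calc A (i / s) ≤ freq S x (i / s * s) + s := hAiu
        _ ≤ (freq S x i : ℝ) + s := by
          have : (freq S x (i / s * s) : ℝ) ≤ freq S x i := by exact_mod_cast f3
          linarith
    linarith
  · have c1 : A ℓj ≤ (freq S x j : ℝ) + 2 * s := by
      calc A ℓj ≤ freq S x (ℓj * s) + s := hAju
        _ ≤ (freq S x j : ℝ) + 2 * s := by
          have : (freq S x (ℓj * s) : ℝ) ≤ freq S x j + s := by exact_mod_cast f2
          linarith
    have c2 : (freq S x i : ℝ) - s ≤ A (i / s) := by
      have : (freq S x i : ℝ) ≤ freq S x (i / s * s) + s := by exact_mod_cast f4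
      linarith
    linarith
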